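/- Let k be an algebraically closed field and let E be an elliptic curve over k (a Weierstrass curve over k with nonzero discriminant). Then for every natural number m there exists a point P in the group E(k) of k-rational points such that P has finite order and the order of P is greater than m; that is, E(k) has torsion of arbitrarily large order. (Used in the proof of Corollary 5.2 of the paper.) -/

import Mathlib

open Polynomial WeierstrassCurve

namespace EllipticTorsionAux

open Classical

variable {k : Type*} [Field k] [IsAlgClosed k] (E : WeierstrassCurve k)

/-- Equality of affine points from equality of coordinates. -/
lemma some_eq_some {W : Affine k} {x₁ y₁ x₂ y₂ : k}
    (h₁ : W.Nonsingular x₁ y₁) (h₂ : W.Nonsingular x₂ y₂) (hx : x₁ = x₂) (hy : y₁ = y₂) :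
    Affine.Point.some _ _ h₁ = Affine.Point.some _ _ h₂ := by subst hx; subst hy; rfl

/-- Over an algebraically closed field, every x-coordinate lifts to a point on the curve. -/
lemma exists_y (x : k) : ∃ y : k, E.toAffine.Equation x y := by
  have hdeg : (X ^ 2 + C (E.a₁ * x + E.a₃) * X
      - C (x ^ 3 + E.a₂ * x ^ 2 + E.a₄ * x + E.a₆)).degree = 2 := by
    compute_degree!
  obtain ⟨y, hy⟩ := IsAlgClosed.exists_root _ (by rw [hdeg]; norm_num)
  refine ⟨y, (E.toAffine.equation_iff x y).mpr ?_⟩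
  simp only [IsRoot.def, eval_add, eval_sub, eval_mul, eval_pow, eval_C, eval_X] at hy
  linear_combination hy

lemma sq_y_sub_negY {x y : k} (h : E.toAffine.Equation x y) :
    (y - E.toAffine.negY x y) ^ 2 = 4*x^3 + E.b₂*x^2 + 2*E.b₄*x + E.b₆ := by
  rw [Affine.equation_iff] at h
  simp only [Affine.negY, WeierstrassCurve.b₂, WeierstrassCurve.b₄, WeierstrassCurve.b₆]
  linear_combination 4 * h

set_option maxHeartbeats 2000000 in
/-- A common root of the duplication quartic and the two-torsion cubic forces `Δ = 0`. -/
lemma delta_eq_zero_of_common_root {s : k}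
    (hφ : s^4 - E.b₄*s^2 - 2*E.b₆*s - E.b₈ = 0)
    (hψ : 4*s^3 + E.b₂*s^2 + 2*E.b₄*s + E.b₆ = 0) : E.Δ = 0 := by
  have h2 : E.Δ ^ 2 = 0 := by
    simp only [WeierstrassCurve.Δ, WeierstrassCurve.b₂, WeierstrassCurve.b₄,
      WeierstrassCurve.b₆, WeierstrassCurve.b₈] at hφ hψ ⊢
    linear_combination ((20736*E.a₆^2*s^2 + 27648*E.a₄*E.a₆^2 + 3072*E.a₄^3*s^2 + 4096*E.a₄^4 + 10368*E.a₃^2*E.a₆*s^2 + 13824*E.a₃^2*E.a₄*E.a₆ + 1296*E.a₃^4*s^2 + 1728*E.a₃^4*E.a₄ + 13824*E.a₂*E.a₆^2*s + (-13824)*E.a₂*E.a₄*E.a₆*s^2 + (-18432)*E.a₂*E.a₄^2*E.a₆ + 2048*E.a₂*E.a₄^3*s + 6912*E.a₂*E.a₃^2*E.a₆*s + (-3456)*E.a₂*E.a₃^2*E.a₄*s^2 + (-4608)*E.a₂*E.a₃^2*E.a₄^2 + 864*E.a₂*E.a₃^4*s + (-6912)*E.a₂^2*E.a₆^2 + (-9216)*E.a₂^2*E.a₄*E.a₆*s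 + (-768)*E.a₂^2*E.a₄^2*s^2 + (-2048)*E.a₂^2*E.a₄^3 + (-3456)*E.a₂^2*E.a₃^2*E.a₆ + (-2304)*E.a₂^2*E.a₃^2*E.a₄*s + (-432)*E.a₂^2*E.a₃^4 + 3072*E.a₂^3*E.a₆*s^2 + 8704*E.a₂^3*E.a₄*E.a₆ + (-512)*E.a₂^3*E.a₄^2*s + 768*E.a₂^3*E.a₃^2*s^2 + 2176*E.a₂^3*E.a₃^2*E.a₄ + 2048*E.a₂^4*E.a₆*s + 256*E.a₂^4*E.a₄^2 + 512*E.a₂^4*E.a₃^2*s + (-1024)*E.a₂^5*E.a₆ + (-256)*E.a₂^5*E.a₃^2 + 13824*E.a₁*E.a₃*E.a₆^2 + 4608*E.a₁*E.a₃*E.a₄^2*s^2 + 8192*E.a₁*E.a₃*E.a₄^3 + 6912*E.a₁*E.a₃^3*E.a₆ + 864*E.a₁*E.a₃^5 + (-6912)*E.a₁*E.a₂*E.a₃*E.a₆*s^2 + (-18432)*E.a₁*E.a₂*E.a₃*E.a₄*E.a₆ + 3072*E.a₁*E.a₂*E.a₃*E.a₄^2*s + (-1728)*E.a₁*E.a₂*E.a₃^3*s^2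 + (-4608)*E.a₁*E.a₂*E.a₃^3*E.a₄ + (-4608)*E.a₁*E.a₂^2*E.a₃*E.a₆*s + (-768)*E.a₁*E.a₂^2*E.a₃*E.a₄*s^2 + (-3072)*E.a₁*E.a₂^2*E.a₃*E.a₄^2 + (-1152)*E.a₁*E.a₂^2*E.a₃^3*s + 4352*E.a₁*E.a₂^3*E.a₃*E.a₆ + (-512)*E.a₁*E.a₂^3*E.a₃*E.a₄*s + 1088*E.a₁*E.a₂^3*E.a₃^3 + 256*E.a₁*E.a₂^4*E.a₃*E.a₄ + 3456*E.a₁^2*E.a₆^2*s + (-3456)*E.a₁^2*E.a₄*E.a₆*s^2 + (-4608)*E.a₁^2*E.a₄^2*E.a₆ + 512*E.a₁^2*E.a₄^3*s + 1728*E.a₁^2*E.a₃^2*E.a₆*s + 1440*E.a₁^2*E.a₃^2*E.a₄*s^2 + 4992*E.a₁^2*E.a₃^2*E.a₄^2 + 216*E.a₁^2*E.a₃^4*s + (-3456)*E.a₁^2*E.a₂*E.a₆^2 + (-4608)*E.a₁^2*E.a₂*E.a₄*E.a₆*s + (-384)*E.a₁^2*E.a₂*E.a₄^2*s^2 + (-1024)*E.a₁^2*E.a₂*E.a₄^3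 + (-6336)*E.a₁^2*E.a₂*E.a₃^2*E.a₆ + 384*E.a₁^2*E.a₂*E.a₃^2*E.a₄*s + (-1368)*E.a₁^2*E.a₂*E.a₃^4 + 2304*E.a₁^2*E.a₂^2*E.a₆*s^2 + 6528*E.a₁^2*E.a₂^2*E.a₄*E.a₆ + (-384)*E.a₁^2*E.a₂^2*E.a₄^2*s + 384*E.a₁^2*E.a₂^2*E.a₃^2*s^2 + 96*E.a₁^2*E.a₂^2*E.a₃^2*E.a₄ + 2048*E.a₁^2*E.a₂^3*E.a₆*s + 256*E.a₁^2*E.a₂^3*E.a₄^2 + 384*E.a₁^2*E.a₂^3*E.a₃^2*s + (-1280)*E.a₁^2*E.a₂^4*E.a₆ + (-256)*E.a₁^2*E.a₂^4*E.a₃^2 + (-1728)*E.a₁^3*E.a₃*E.a₆*s^2 + (-4608)*E.a₁^3*E.a₃*E.a₄*E.a₆ + 768*E.a₁^3*E.a₃*E.a₄^2*s + (-48)*E.a₁^3*E.a₃^3*s^2 + 896*E.a₁^3*E.a₃^3*E.a₄ + (-2304)*E.a₁^3*E.a₂*E.a₃*E.a₆*s + (-384)*E.a₁^3*E.a₂*E.a₃*E.a₄*s^2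 + (-1536)*E.a₁^3*E.a₂*E.a₃*E.a₄^2 + (-320)*E.a₁^3*E.a₂*E.a₃^3*s + 3264*E.a₁^3*E.a₂^2*E.a₃*E.a₆ + (-384)*E.a₁^3*E.a₂^2*E.a₃*E.a₄*s + 560*E.a₁^3*E.a₂^2*E.a₃^3 + 256*E.a₁^3*E.a₂^3*E.a₃*E.a₄ + (-432)*E.a₁^4*E.a₆^2 + (-576)*E.a₁^4*E.a₄*E.a₆*s + (-48)*E.a₁^4*E.a₄^2*s^2 + (-128)*E.a₁^4*E.a₄^3 + (-1368)*E.a₁^4*E.a₃^2*E.a₆ + 240*E.a₁^4*E.a₃^2*E.a₄*s + (-59)*E.a₁^4*E.a₃^4 + 576*E.a₁^4*E.a₂*E.a₆*s^2 + 1632*E.a₁^4*E.a₂*E.a₄*E.a₆ + (-96)*E.a₁^4*E.a₂*E.a₄^2*s + 48*E.a₁^4*E.a₂*E.a₃^2*s^2 + (-360)*E.a₁^4*E.a₂*E.a₃^2*E.a₄ + 768*E.a₁^4*E.a₂^2*E.a₆*s + 96*E.a₁^4*E.a₂^2*E.a₄^2 + 96*E.a₁^4*E.a₂^2*E.a₃^2*s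 + (-640)*E.a₁^4*E.a₂^3*E.a₆ + (-96)*E.a₁^4*E.a₂^3*E.a₃^2 + (-288)*E.a₁^5*E.a₃*E.a₆*s + (-48)*E.a₁^5*E.a₃*E.a₄*s^2 + (-192)*E.a₁^5*E.a₃*E.a₄^2 + (-8)*E.a₁^5*E.a₃^3*s + 816*E.a₁^5*E.a₂*E.a₃*E.a₆ + (-96)*E.a₁^5*E.a₂*E.a₃*E.a₄*s + 76*E.a₁^5*E.a₂*E.a₃^3 + 96*E.a₁^5*E.a₂^2*E.a₃*E.a₄ + 48*E.a₁^6*E.a₆*s^2 + 136*E.a₁^6*E.a₄*E.a₆ + (-8)*E.a₁^6*E.a₄^2*s + (-62)*E.a₁^6*E.a₃^2*E.a₄ + 128*E.a₁^6*E.a₂*E.a₆*s + 16*E.a₁^6*E.a₂*E.a₄^2 + 8*E.a₁^6*E.a₂*E.a₃^2*s + (-160)*E.a₁^6*E.a₂^2*E.a₆ + (-16)*E.a₁^6*E.a₂^2*E.a₃^2 + 68*E.a₁^7*E.a₃*E.a₆ + (-8)*E.a₁^7*E.a₃*E.a₄*s + E.a₁^7*E.a₃^3 + 16*E.a₁^7*E.a₂*E.a₃*E.a₄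 + 8*E.a₁^8*E.a₆*s + E.a₁^8*E.a₄^2 + (-20)*E.a₁^8*E.a₂*E.a₆ + (-E.a₁^8*E.a₂*E.a₃^2) + E.a₁^9*E.a₃*E.a₄ + (-E.a₁^10*E.a₆))) * hφ + (((-5184)*E.a₆^2*s^3 + 46656*E.a₆^3 + 8640*E.a₄*E.a₆^2*s + (-768)*E.a₄^3*s^3 + 6912*E.a₄^3*E.a₆ + 1280*E.a₄^4*s + (-2592)*E.a₃^2*E.a₆*s^3 + 34992*E.a₃^2*E.a₆^2 + 4320*E.a₃^2*E.a₄*E.a₆*s + 1728*E.a₃^2*E.a₄^3 + (-324)*E.a₃^4*s^3 + 8748*E.a₃^4*E.a₆ + 540*E.a₃^4*E.a₄*s + 729*E.a₃^6 + 1728*E.a₂*E.a₆^2*s^2 + 3456*E.a₂*E.a₄*E.a₆*s^3 + (-34560)*E.a₂*E.a₄*E.a₆^2 + (-5760)*E.a₂*E.a₄^2*E.a₆*s + 256*E.a₂*E.a₄^3*s^2 + (-512)*E.a₂*E.a₄^4 + 864*E.a₂*E.a₃^2*E.a₆*s^2 + 864*E.a₂*E.a₃^2*E.a₄*s^3 +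 (-17280)*E.a₂*E.a₃^2*E.a₄*E.a₆ + (-1440)*E.a₂*E.a₃^2*E.a₄^2*s + 108*E.a₂*E.a₃^4*s^2 + (-2160)*E.a₂*E.a₃^4*E.a₄ + (-1152)*E.a₂^2*E.a₄*E.a₆*s^2 + 192*E.a₂^2*E.a₄^2*s^3 + 576*E.a₂^2*E.a₄^2*E.a₆ + (-320)*E.a₂^2*E.a₄^3*s + (-288)*E.a₂^2*E.a₃^2*E.a₄*s^2 + 144*E.a₂^2*E.a₃^2*E.a₄^2 + (-768)*E.a₂^3*E.a₆*s^3 + 6912*E.a₂^3*E.a₆^2 + 1280*E.a₂^3*E.a₄*E.a₆*s + (-64)*E.a₂^3*E.a₄^2*s^2 + 128*E.a₂^3*E.a₄^3 + (-192)*E.a₂^3*E.a₃^2*s^3 + 3456*E.a₂^3*E.a₃^2*E.a₆ + 320*E.a₂^3*E.a₃^2*E.a₄*s + 432*E.a₂^3*E.a₃^4 + 256*E.a₂^4*E.a₆*s^2 + (-512)*E.a₂^4*E.a₄*E.a₆ + 64*E.a₂^4*E.a₃^2*s^2 + (-128)*E.a₂^4*E.a₃^2*E.a₄ + 4320*E.a₁*E.a₃*E.a₆^2*s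 + (-1152)*E.a₁*E.a₃*E.a₄^2*s^3 + 10368*E.a₁*E.a₃*E.a₄^2*E.a₆ + 2560*E.a₁*E.a₃*E.a₄^3*s + 2160*E.a₁*E.a₃^3*E.a₆*s + 2592*E.a₁*E.a₃^3*E.a₄^2 + 270*E.a₁*E.a₃^5*s + 1728*E.a₁*E.a₂*E.a₃*E.a₆*s^3 + (-17280)*E.a₁*E.a₂*E.a₃*E.a₆^2 + (-5760)*E.a₁*E.a₂*E.a₃*E.a₄*E.a₆*s + 384*E.a₁*E.a₂*E.a₃*E.a₄^2*s^2 + (-1024)*E.a₁*E.a₂*E.a₃*E.a₄^3 + 432*E.a₁*E.a₂*E.a₃^3*s^3 + (-8640)*E.a₁*E.a₂*E.a₃^3*E.a₆ + (-1440)*E.a₁*E.a₂*E.a₃^3*E.a₄*s + (-1080)*E.a₁*E.a₂*E.a₃^5 + (-576)*E.a₁*E.a₂^2*E.a₃*E.a₆*s^2 + 192*E.a₁*E.a₂^2*E.a₃*E.a₄*s^3 + 576*E.a₁*E.a₂^2*E.a₃*E.a₄*E.a₆ + (-480)*E.a₁*E.a₂^2*E.a₃*E.a₄^2*s + (-144)*E.a₁*E.a₂^2*E.a₃^3*s^2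 + 144*E.a₁*E.a₂^2*E.a₃^3*E.a₄ + 640*E.a₁*E.a₂^3*E.a₃*E.a₆*s + (-64)*E.a₁*E.a₂^3*E.a₃*E.a₄*s^2 + 192*E.a₁*E.a₂^3*E.a₃*E.a₄^2 + 160*E.a₁*E.a₂^3*E.a₃^3*s + (-256)*E.a₁*E.a₂^4*E.a₃*E.a₆ + (-64)*E.a₁*E.a₂^4*E.a₃^3 + 432*E.a₁^2*E.a₆^2*s^2 + 864*E.a₁^2*E.a₄*E.a₆*s^3 + (-8640)*E.a₁^2*E.a₄*E.a₆^2 + (-1440)*E.a₁^2*E.a₄^2*E.a₆*s + 64*E.a₁^2*E.a₄^3*s^2 + (-128)*E.a₁^2*E.a₄^4 + 216*E.a₁^2*E.a₃^2*E.a₆*s^2 + (-360)*E.a₁^2*E.a₃^2*E.a₄*s^3 + 864*E.a₁^2*E.a₃^2*E.a₄*E.a₆ + 1560*E.a₁^2*E.a₃^2*E.a₄^2*s + 27*E.a₁^2*E.a₃^4*s^2 + 756*E.a₁^2*E.a₃^4*E.a₄ + (-576)*E.a₁^2*E.a₂*E.a₄*E.a₆*s^2 + 96*E.a₁^2*E.a₂*E.a₄^2*s^3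 + 288*E.a₁^2*E.a₂*E.a₄^2*E.a₆ + (-160)*E.a₁^2*E.a₂*E.a₄^3*s + (-1440)*E.a₁^2*E.a₂*E.a₃^2*E.a₆*s + 48*E.a₁^2*E.a₂*E.a₃^2*E.a₄*s^2 + (-696)*E.a₁^2*E.a₂*E.a₃^2*E.a₄^2 + (-360)*E.a₁^2*E.a₂*E.a₃^4*s + (-576)*E.a₁^2*E.a₂^2*E.a₆*s^3 + 5184*E.a₁^2*E.a₂^2*E.a₆^2 + 960*E.a₁^2*E.a₂^2*E.a₄*E.a₆*s + (-48)*E.a₁^2*E.a₂^2*E.a₄^2*s^2 + 96*E.a₁^2*E.a₂^2*E.a₄^3 + (-96)*E.a₁^2*E.a₂^2*E.a₃^2*s^3 + 2736*E.a₁^2*E.a₂^2*E.a₃^2*E.a₆ + 360*E.a₁^2*E.a₂^2*E.a₃^4 + 256*E.a₁^2*E.a₂^3*E.a₆*s^2 + (-512)*E.a₁^2*E.a₂^3*E.a₄*E.a₆ + 48*E.a₁^2*E.a₂^3*E.a₃^2*s^2 + (-32)*E.a₁^2*E.a₂^3*E.a₃^2*E.a₄ + 432*E.a₁^3*E.a₃*E.a₆*s^3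 + (-4320)*E.a₁^3*E.a₃*E.a₆^2 + (-1440)*E.a₁^3*E.a₃*E.a₄*E.a₆*s + 96*E.a₁^3*E.a₃*E.a₄^2*s^2 + (-256)*E.a₁^3*E.a₃*E.a₄^3 + 12*E.a₁^3*E.a₃^3*s^3 + (-1296)*E.a₁^3*E.a₃^3*E.a₆ + 280*E.a₁^3*E.a₃^3*E.a₄*s + (-54)*E.a₁^3*E.a₃^5 + (-288)*E.a₁^3*E.a₂*E.a₃*E.a₆*s^2 + 96*E.a₁^3*E.a₂*E.a₃*E.a₄*s^3 + 288*E.a₁^3*E.a₂*E.a₃*E.a₄*E.a₆ + (-240)*E.a₁^3*E.a₂*E.a₃*E.a₄^2*s + (-40)*E.a₁^3*E.a₂*E.a₃^3*s^2 + (-184)*E.a₁^3*E.a₂*E.a₃^3*E.a₄ + 480*E.a₁^3*E.a₂^2*E.a₃*E.a₆*s + (-48)*E.a₁^3*E.a₂^2*E.a₃*E.a₄*s^2 + 144*E.a₁^3*E.a₂^2*E.a₃*E.a₄^2 + 80*E.a₁^3*E.a₂^2*E.a₃^3*s + (-256)*E.a₁^3*E.a₂^3*E.a₃*E.a₆ +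 (-48)*E.a₁^3*E.a₂^3*E.a₃^3 + (-72)*E.a₁^4*E.a₄*E.a₆*s^2 + 12*E.a₁^4*E.a₄^2*s^3 + 36*E.a₁^4*E.a₄^2*E.a₆ + (-20)*E.a₁^4*E.a₄^3*s + (-360)*E.a₁^4*E.a₃^2*E.a₆*s + 30*E.a₁^4*E.a₃^2*E.a₄*s^2 + (-183)*E.a₁^4*E.a₃^2*E.a₄^2 + (-10)*E.a₁^4*E.a₃^4*s + (-144)*E.a₁^4*E.a₂*E.a₆*s^3 + 1296*E.a₁^4*E.a₂*E.a₆^2 + 240*E.a₁^4*E.a₂*E.a₄*E.a₆*s + (-12)*E.a₁^4*E.a₂*E.a₄^2*s^2 + 24*E.a₁^4*E.a₂*E.a₄^3 + (-12)*E.a₁^4*E.a₂*E.a₃^2*s^3 + 720*E.a₁^4*E.a₂*E.a₃^2*E.a₆ + (-60)*E.a₁^4*E.a₂*E.a₃^2*E.a₄*s + 67*E.a₁^4*E.a₂*E.a₃^4 + 96*E.a₁^4*E.a₂^2*E.a₆*s^2 + (-192)*E.a₁^4*E.a₂^2*E.a₄*E.a₆ + 12*E.a₁^4*E.a₂^2*E.a₃^2*s^2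 + 24*E.a₁^4*E.a₂^2*E.a₃^2*E.a₄ + (-36)*E.a₁^5*E.a₃*E.a₆*s^2 + 12*E.a₁^5*E.a₃*E.a₄*s^3 + 36*E.a₁^5*E.a₃*E.a₄*E.a₆ + (-30)*E.a₁^5*E.a₃*E.a₄^2*s + (-E.a₁^5*E.a₃^3*s^2) + (-55)*E.a₁^5*E.a₃^3*E.a₄ + 120*E.a₁^5*E.a₂*E.a₃*E.a₆*s + (-12)*E.a₁^5*E.a₂*E.a₃*E.a₄*s^2 + 36*E.a₁^5*E.a₂*E.a₃*E.a₄^2 + 10*E.a₁^5*E.a₂*E.a₃^3*s + (-96)*E.a₁^5*E.a₂^2*E.a₃*E.a₆ + (-12)*E.a₁^5*E.a₂^2*E.a₃^3 + (-12)*E.a₁^6*E.a₆*s^3 + 108*E.a₁^6*E.a₆^2 + 20*E.a₁^6*E.a₄*E.a₆*s + (-E.a₁^6*E.a₄^2*s^2) + 2*E.a₁^6*E.a₄^3 + 63*E.a₁^6*E.a₃^2*E.a₆ + (-10)*E.a₁^6*E.a₃^2*E.a₄*s + E.a₁^6*E.a₃^4 + 16*E.a₁^6*E.a₂*E.a₆*s^2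 + (-32)*E.a₁^6*E.a₂*E.a₄*E.a₆ + E.a₁^6*E.a₂*E.a₃^2*s^2 + 10*E.a₁^6*E.a₂*E.a₃^2*E.a₄ + 10*E.a₁^7*E.a₃*E.a₆*s + (-E.a₁^7*E.a₃*E.a₄*s^2) + 3*E.a₁^7*E.a₃*E.a₄^2 + (-16)*E.a₁^7*E.a₂*E.a₃*E.a₆ + (-E.a₁^7*E.a₂*E.a₃^3) + E.a₁^8*E.a₆*s^2 + (-2)*E.a₁^8*E.a₄*E.a₆ + E.a₁^8*E.a₃^2*E.a₄ + (-E.a₁^9*E.a₃*E.a₆))) * hψ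
  exact pow_eq_zero_iff (by norm_num : (2:ℕ) ≠ 0) |>.mp h2

/-- The duplication formula for the x-coordinate, in cleared-denominator form. -/
lemma addX_mul {x y L : k}
    (heq : y^2 + E.a₁*x*y + E.a₃*y = x^3 + E.a₂*x^2 + E.a₄*x + E.a₆)
    (hL : L * (2*y + E.a₁*x + E.a₃) = 3*x^2 + 2*E.a₂*x + E.a₄ - E.a₁*y) :
    (L^2 + E.a₁*L - E.a₂ - 2*x) * (4*x^3 + E.b₂*x^2 + 2*E.b₄*x + E.b₆)
      = x^4 - E.b₄*x^2 - 2*E.b₆*x - E.b₈ := by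
  simp only [WeierstrassCurve.b₂, WeierstrassCurve.b₄, WeierstrassCurve.b₆,
    WeierstrassCurve.b₈]
  linear_combination (2*y*L + 3*x^2 + E.a₄ + E.a₃*L + 2*E.a₂*x + E.a₁*y + E.a₁*x*L
      + E.a₁*E.a₃ + E.a₁^2*x) * hL
    + ((-4)*L^2 + (-4)*E.a₁*L + (-(E.a₁^2))) * heq

lemma y_sub_negY {x y : k} : y - E.toAffine.negY x y = 2*y + E.a₁*x + E.a₃ := by
  simp only [Affine.negY]; ring

/-- Every nonzero point is divisible by 2 (algebraically closed base field). -/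
lemma exists_half (hΔ : E.Δ ≠ 0) (P : E.toAffine.Point) (hP : P ≠ 0) :
    ∃ Q : E.toAffine.Point, Q + Q = P := by
  rcases P with _ | @⟨x₀, y₀, h₀⟩
  · exact absurd rfl hP
  have hdeg : (X^4 - C E.b₄ * X^2 - C (2*E.b₆) * X - C E.b₈
      - C x₀ * (C 4 * X^3 + C E.b₂ * X^2 + C (2*E.b₄) * X + C E.b₆)).degree = 4 := by
    compute_degree!
  obtain ⟨x₁, hx₁⟩ := IsAlgClosed.exists_root _ (by rw [hdeg]; norm_num)
  simp only [IsRoot.def, eval_add, eval_sub, eval_mul, eval_pow, eval_C, eval_X,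
    eval_ofNat] at hx₁
  obtain ⟨y₁, heq₁⟩ := exists_y E x₁
  have h₁ := (E.toAffine.equation_iff_nonsingular_of_Δ_ne_zero hΔ).mp heq₁
  have hψ : 4*x₁^3 + E.b₂*x₁^2 + 2*E.b₄*x₁ + E.b₆ ≠ 0 := by
    intro h0
    exact hΔ (delta_eq_zero_of_common_root E (by linear_combination hx₁ + x₀ * h0) h0)
  have hy : y₁ ≠ E.toAffine.negY x₁ y₁ := by
    intro h
    apply hψ
    have h2 := sq_y_sub_negY E heq₁
    rw [← h2, sub_eq_zero_of_eq h]
    simp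
  have hd : y₁ - E.toAffine.negY x₁ y₁ ≠ 0 := sub_ne_zero.2 hy
  have hL : E.toAffine.slope x₁ x₁ y₁ y₁ * (2*y₁ + E.a₁*x₁ + E.a₃)
      = 3*x₁^2 + 2*E.a₂*x₁ + E.a₄ - E.a₁*y₁ := by
    rw [Affine.slope_of_Y_ne rfl hy, ← y_sub_negY]
    exact div_mul_cancel₀ _ hd
  have key := addX_mul E ((E.toAffine.equation_iff x₁ y₁).mp heq₁) hL
  have hx₂ : E.toAffine.addX x₁ x₁ (E.toAffine.slope x₁ x₁ y₁ y₁) = x₀ := by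
    apply mul_right_cancel₀ hψ
    rw [show E.toAffine.addX x₁ x₁ (E.toAffine.slope x₁ x₁ y₁ y₁)
        = (E.toAffine.slope x₁ x₁ y₁ y₁)^2 + E.a₁*(E.toAffine.slope x₁ x₁ y₁ y₁)
          - E.a₂ - 2*x₁ by simp only [Affine.addX]; ring, key]
    linear_combination hx₁
  have hQQ := Affine.Point.add_self_of_Y_ne (h₁ := h₁) hy
  set hadd := Affine.nonsingular_add h₁ h₁ fun hxy => hy hxy.2 with hadd_def
  rcases Affine.Y_eq_of_X_eq hadd.1 h₀.1 hx₂ with hyy | hyy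
  · exact ⟨.some _ _ h₁, hQQ.trans (some_eq_some _ _ hx₂ hyy)⟩
  · refine ⟨-.some _ _ h₁, ?_⟩
    have hneg : Affine.Point.some _ _ h₁ + .some _ _ h₁ = -.some _ _ h₀ := by
      rw [hQQ, Affine.Point.neg_some]
      exact some_eq_some _ _ hx₂ hyy
    rw [← neg_add, hneg, neg_neg]

/-- Existence of a point of order 2, given a root of the 2-torsion cubic. -/
lemma exists_order_two (hΔ : E.Δ ≠ 0)
    (hroot : ∃ s : k, 4*s^3 + E.b₂*s^2 + 2*E.b₄*s + E.b₆ = 0) :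
    ∃ P : E.toAffine.Point, addOrderOf P = 2 := by
  haveI : Fact (Nat.Prime 2) := ⟨by norm_num⟩
  obtain ⟨s, hs⟩ := hroot
  obtain ⟨y, heq⟩ := exists_y E s
  have h := (E.toAffine.equation_iff_nonsingular_of_Δ_ne_zero hΔ).mp heq
  have hyeq : y = E.toAffine.negY s y := by
    have h2 := sq_y_sub_negY E heq
    rw [hs] at h2
    exact sub_eq_zero.mp (pow_eq_zero_iff (by norm_num : (2:ℕ) ≠ 0) |>.mp h2)
  refine ⟨.some _ _ h, addOrderOf_eq_prime ?_ (Affine.Point.some_ne_zero h)⟩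
  rw [two_nsmul]
  exact Affine.Point.add_self_of_Y_eq hyeq

section CaseB

lemma caseB_a₃_ne (hc : (2:k) = 0) (h1 : E.a₁ = 0) (hΔ : E.Δ ≠ 0) : E.a₃ ≠ 0 := by
  intro h3
  apply hΔ
  simp only [WeierstrassCurve.Δ, WeierstrassCurve.b₂, WeierstrassCurve.b₄,
    WeierstrassCurve.b₆, WeierstrassCurve.b₈, h1, h3]
  linear_combination (-32*E.a₂^3*E.a₆ + 8*E.a₂^2*E.a₄^2 - 32*E.a₄^3 - 216*E.a₆^2
      + 144*E.a₂*E.a₄*E.a₆) * hc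

lemma caseB_sub_negY (hc : (2:k) = 0) (h1 : E.a₁ = 0) (x y : k) : y - E.toAffine.negY x y = E.a₃ := by
  rw [y_sub_negY]
  linear_combination y * hc + x * h1

lemma caseB_y_ne (hc : (2:k) = 0) (h1 : E.a₁ = 0) (hΔ : E.Δ ≠ 0) (x y : k) : y ≠ E.toAffine.negY x y := by
  intro h
  have h2 := caseB_sub_negY E hc h1 x y
  rw [← h, sub_self] at h2
  exact caseB_a₃_ne E hc h1 hΔ h2.symm

lemma caseB_x2 (hc : (2:k) = 0) {x L : k} (hL : L * E.a₃ = 3*x^2 + 2*E.a₂*x + E.a₄) :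
    (x - (L^2 - E.a₂ - 2*x)) * E.a₃^2
      + ((x^2 + E.a₄)^2 - E.a₃^2*x - E.a₂*E.a₃^2) = 0 := by
  linear_combination ((-3)*x^2 - E.a₄ - E.a₃*L - 2*E.a₂*x) * hL
    + ((-4)*x^4 - 2*E.a₄*x^2 + E.a₃^2*x - 6*E.a₂*x^3 - 2*E.a₂*E.a₄*x - 2*E.a₂^2*x^2) * hc

lemma caseB_x3 (hc : (2:k) = 0) {x y L M : k}
    (hM : M * ((L^2 - E.a₂ - 2*x) - x)
      = (-(L*((L^2 - E.a₂ - 2*x) - x) + y) - E.a₃) - y) :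
    (M^2 - E.a₂ - (L^2 - E.a₂ - 2*x) - 2*x) * ((L^2 - E.a₂ - 2*x) - x)^2 - E.a₃^2 = 0 := by
  linear_combination (L^2*M - L^3 - 2*y - 3*x*M + 3*x*L - E.a₃ - E.a₂*M + E.a₂*L) * hM
    + (2*y*L^3 + 2*y^2 - 6*x*y*L + E.a₃*L^3 + 2*E.a₃*y - 3*E.a₃*x*L - 2*E.a₂*y*L
      - E.a₂*E.a₃*L) * hc

lemma caseB_slope (hc : (2:k) = 0) (h1 : E.a₁ = 0) (hΔ : E.Δ ≠ 0) {x y : k} (heq : E.toAffine.Equation x y) :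
    E.toAffine.slope x x y y * E.a₃ = 3*x^2 + 2*E.a₂*x + E.a₄ := by
  have hy := caseB_y_ne E hc h1 hΔ x y
  have h0 : E.toAffine.slope x x y y * (y - E.toAffine.negY x y)
      = 3*x^2 + 2*E.a₂*x + E.a₄ - E.a₁*y := by
    rw [Affine.slope_of_Y_ne rfl hy]
    exact div_mul_cancel₀ _ (sub_ne_zero.2 hy)
  rw [caseB_sub_negY E hc h1] at h0
  linear_combination h0 - y * h1

lemma caseB_addX_eq (h1 : E.a₁ = 0) {x : k} (L : k) :
    E.toAffine.addX x x L = L^2 - E.a₂ - 2*x := by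
  simp only [Affine.addX, h1]; ring

/-- In characteristic 2 with `a₁ = 0`, there is a point of order 3. -/
lemma caseB_order_three (hc : (2:k) = 0) (h1 : E.a₁ = 0) (hΔ : E.Δ ≠ 0) : ∃ P : E.toAffine.Point, addOrderOf P = 3 := by
  haveI : Fact (Nat.Prime 3) := ⟨by norm_num⟩
  have hdeg : ((X^2 + C E.a₄)^2 - C (E.a₃^2) * X - C (E.a₂*E.a₃^2)).degree = 4 := by
    compute_degree!
  obtain ⟨s, hs⟩ := IsAlgClosed.exists_root _ (by rw [hdeg]; norm_num)
  simp only [IsRoot.def, eval_add, eval_sub, eval_mul, eval_pow, eval_C, eval_X] at hs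
  obtain ⟨y, heq⟩ := exists_y E s
  have h := (E.toAffine.equation_iff_nonsingular_of_Δ_ne_zero hΔ).mp heq
  have hy := caseB_y_ne E hc h1 hΔ s y
  have hL := caseB_slope E hc h1 hΔ heq
  have h2 := caseB_x2 E hc hL
  have hX2 : E.toAffine.addX s s (E.toAffine.slope s s y y) = s := by
    rw [caseB_addX_eq E h1]
    have hz : (s - ((E.toAffine.slope s s y y)^2 - E.a₂ - 2*s)) * E.a₃^2 = 0 := by
      linear_combination h2 - hs
    rcases mul_eq_zero.mp hz with hz | hz
    · linear_combination -hz
    · exact absurd (pow_eq_zero_iff (by norm_num : (2:ℕ) ≠ 0) |>.mp hz) (caseB_a₃_ne E hc h1 hΔ)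
  have hQQ := Affine.Point.add_self_of_Y_ne (h₁ := h) hy
  set hadd := Affine.nonsingular_add h h fun hxy => hy hxy.2 with hadd_def
  rcases Affine.Y_eq_of_X_eq hadd.1 h.1 hX2 with hyy | hyy
  · exfalso
    apply Affine.Point.some_ne_zero h
    have : Affine.Point.some _ _ h + .some _ _ h = .some _ _ h + 0 := by
      rw [add_zero, hQQ]; exact some_eq_some _ _ hX2 hyy
    exact add_left_cancel this
  · refine ⟨.some _ _ h, addOrderOf_eq_prime ?_ (Affine.Point.some_ne_zero h)⟩
    have hneg : Affine.Point.some _ _ h + .some _ _ h = -.some _ _ h := by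
      rw [hQQ, Affine.Point.neg_some]
      exact some_eq_some _ _ hX2 hyy
    show (2 + 1) • Affine.Point.some _ _ h = 0
    rw [add_nsmul, two_nsmul, one_nsmul, hneg, neg_add_cancel]

/-- In characteristic 2 with `a₁ = 0`, every nonzero point is divisible by 3. -/
lemma caseB_exists_third (hc : (2:k) = 0) (h1 : E.a₁ = 0) (hΔ : E.Δ ≠ 0) (P : E.toAffine.Point) (hP : P ≠ 0) :
    ∃ Q : E.toAffine.Point, 3 • Q = P := by
  have ha₃ := caseB_a₃_ne E hc h1 hΔ
  rcases P with _ | @⟨x₀, y₀, h₀⟩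
  · exact absurd rfl hP
  have hdeg : ((X - C x₀) * ((X^2 + C E.a₄)^2 - C (E.a₃^2) * X - C (E.a₂*E.a₃^2))^2
      - C (E.a₃^6)).degree = 9 := by
    compute_degree!
  obtain ⟨x₁, hx₁⟩ := IsAlgClosed.exists_root _ (by rw [hdeg]; norm_num)
  simp only [IsRoot.def, eval_add, eval_sub, eval_mul, eval_pow, eval_C, eval_X] at hx₁
  have hG : (x₁^2 + E.a₄)^2 - E.a₃^2*x₁ - E.a₂*E.a₃^2 ≠ 0 := by
    intro h0
    apply ha₃
    have h6 : E.a₃^6 = 0 := by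
      linear_combination ((x₁ - x₀) * ((x₁^2 + E.a₄)^2 - E.a₃^2*x₁ - E.a₂*E.a₃^2)) * h0 - hx₁
    exact pow_eq_zero_iff (by norm_num) |>.mp h6
  obtain ⟨y₁, heq₁⟩ := exists_y E x₁
  have h₁ := (E.toAffine.equation_iff_nonsingular_of_Δ_ne_zero hΔ).mp heq₁
  have hy := caseB_y_ne E hc h1 hΔ x₁ y₁
  have hL := caseB_slope E hc h1 hΔ heq₁
  set L := E.toAffine.slope x₁ x₁ y₁ y₁ with hLdef
  have hX2e : E.toAffine.addX x₁ x₁ L = L^2 - E.a₂ - 2*x₁ := caseB_addX_eq E h1 L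
  have e2 : (x₁ - E.toAffine.addX x₁ x₁ L) * E.a₃^2
      = -((x₁^2 + E.a₄)^2 - E.a₃^2*x₁ - E.a₂*E.a₃^2) := by
    rw [hX2e]
    linear_combination caseB_x2 E hc hL
  have hX2ne : E.toAffine.addX x₁ x₁ L ≠ x₁ := by
    intro hcon
    apply hG
    have : (x₁ - E.toAffine.addX x₁ x₁ L) * E.a₃^2 = 0 := by rw [hcon, sub_self, zero_mul]
    rw [this] at e2
    linear_combination e2
  have hQQ := Affine.Point.add_self_of_Y_ne (h₁ := h₁) hy
  set hadd := Affine.nonsingular_add h₁ h₁ fun hxy => hy hxy.2 with hadd_def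
  -- the slope for the second addition
  set M := E.toAffine.slope (E.toAffine.addX x₁ x₁ L) x₁ (E.toAffine.addY x₁ x₁ y₁ L) y₁
    with hMdef
  have hM : M * (E.toAffine.addX x₁ x₁ L - x₁) = E.toAffine.addY x₁ x₁ y₁ L - y₁ := by
    rw [hMdef, Affine.slope_of_X_ne hX2ne]
    exact div_mul_cancel₀ _ (sub_ne_zero.2 hX2ne)
  have hY2e : E.toAffine.addY x₁ x₁ y₁ L
      = -(L*((L^2 - E.a₂ - 2*x₁) - x₁) + y₁) - E.a₃ := by
    simp only [Affine.addY, Affine.negAddY, Affine.addX, Affine.negY, h1]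
    ring
  rw [hX2e, hY2e] at hM
  have key := caseB_x3 E hc hM
  have hsum := Affine.Point.add_of_X_ne (h₁ := hadd) (h₂ := h₁) hX2ne
  have e1 : (E.toAffine.addX (E.toAffine.addX x₁ x₁ L) x₁ M - x₁)
      * (E.toAffine.addX x₁ x₁ L - x₁)^2 = E.a₃^2 := by
    simp only [Affine.addX, h1] at *
    linear_combination key
  have e2sq : (x₁ - E.toAffine.addX x₁ x₁ L)^2 * E.a₃^4
      = ((x₁^2 + E.a₄)^2 - E.a₃^2*x₁ - E.a₂*E.a₃^2)^2 := by
    linear_combination ((x₁ - E.toAffine.addX x₁ x₁ L) * E.a₃^2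
      - ((x₁^2 + E.a₄)^2 - E.a₃^2*x₁ - E.a₂*E.a₃^2)) * e2
  have keyfinal : (E.toAffine.addX (E.toAffine.addX x₁ x₁ L) x₁ M - x₀)
      * ((x₁^2 + E.a₄)^2 - E.a₃^2*x₁ - E.a₂*E.a₃^2)^2 = 0 := by
    linear_combination E.a₃^4 * e1
      - (E.toAffine.addX (E.toAffine.addX x₁ x₁ L) x₁ M - x₁) * e2sq
      + hx₁ + E.a₃^6 * hc
  have hx3 : E.toAffine.addX (E.toAffine.addX x₁ x₁ L) x₁ M = x₀ := by
    rcases mul_eq_zero.mp keyfinal with hz | hz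
    · exact sub_eq_zero.mp hz
    · exact absurd hz (pow_ne_zero 2 hG)
  -- 3 • Q = (Q + Q) + Q
  have h3Q : ∀ R : E.toAffine.Point, 3 • R = R + R + R := by
    intro R
    show (2 + 1) • R = R + R + R
    rw [add_nsmul, two_nsmul, one_nsmul]
  set hadd3 := Affine.nonsingular_add hadd h₁ fun h => (hX2ne h.1).elim with hadd3_def
  have hsum3 : (3:ℕ) • (Affine.Point.some _ _ h₁) = .some _ _ hadd3 := by
    rw [h3Q, hQQ, hsum]
  rcases Affine.Y_eq_of_X_eq hadd3.1 h₀.1 hx3 with hyy | hyy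
  · exact ⟨.some _ _ h₁, hsum3.trans (some_eq_some _ _ hx3 hyy)⟩
  · refine ⟨-.some _ _ h₁, ?_⟩
    have : (3:ℕ) • (Affine.Point.some _ _ h₁) = -.some _ _ h₀ := by
      rw [hsum3, Affine.Point.neg_some]
      exact some_eq_some _ _ hx3 hyy
    rw [neg_nsmul, this, neg_neg]

end CaseB

/-- Generic chain: a point of prime order `p` plus `p`-divisibility gives points of
order `p ^ (n+1)` for all `n`. -/
lemma chain {G : Type*} [AddCommGroup G] {p : ℕ} (hp : p.Prime)
    (base : ∃ P : G, addOrderOf P = p)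
    (step : ∀ P : G, P ≠ 0 → ∃ Q : G, p • Q = P) :
    ∀ n : ℕ, ∃ P : G, addOrderOf P = p ^ (n + 1) := by
  intro n
  induction n with
  | zero => simpa using base
  | succ n ih =>
    obtain ⟨P, hP⟩ := ih
    have hPne : P ≠ 0 := by
      intro h
      rw [h, addOrderOf_zero] at hP
      exact absurd hP.symm (Nat.one_lt_pow (by omega) hp.one_lt).ne'
    obtain ⟨Q, hQ⟩ := step P hPne
    have h0 : p ^ (n + 2) • Q = 0 := by
      have : p ^ (n + 2) = p ^ (n + 1) * p := by ring
      rw [this, mul_comm, mul_nsmul, hQ, ← hP, addOrderOf_nsmul_eq_zero]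
    have h1 : ¬ p ^ (n + 1) • Q = 0 := by
      intro hcontra
      have : p ^ (n + 1) = p ^ n * p := by ring
      rw [this, mul_comm, mul_nsmul, hQ] at hcontra
      have hdvd := addOrderOf_dvd_of_nsmul_eq_zero hcontra
      rw [hP] at hdvd
      exact absurd ((Nat.pow_dvd_pow_iff_le_right hp.one_lt).mp hdvd) (by omega)
    refine ⟨Q, ?_⟩
    obtain ⟨j, hj, he⟩ := (Nat.dvd_prime_pow hp).mp (addOrderOf_dvd_of_nsmul_eq_zero h0)
    have hj2 : j = n + 2 := by
      by_contra hne
      exact h1 (addOrderOf_dvd_iff_nsmul_eq_zero.mp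
        (he ▸ pow_dvd_pow p (by omega : j ≤ n + 1)))
    rw [he, hj2]

end EllipticTorsionAux

open Classical EllipticTorsionAux WeierstrassCurve in
/-- Over an algebraically closed field `k`, the group of `k`-rational points of an
elliptic curve (a Weierstrass curve with nonzero discriminant) has torsion of
arbitrarily large order: for every natural number `m` there is a point of finite
additive order greater than `m`. -/
theorem elliptic_curve_torsion_of_arbitrarily_large_order
    (k : Type*) [Field k] [IsAlgClosed k]
    (E : WeierstrassCurve k) (hΔ : E.Δ ≠ 0) (m : ℕ) :
    ∃ P : E.toAffine.Point, IsOfFinAddOrder P ∧ m < addOrderOf P := by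
  have key : ∃ p : ℕ, p.Prime ∧
      ∀ n : ℕ, ∃ P : E.toAffine.Point, addOrderOf P = p ^ (n + 1) := by
    by_cases hc : (2:k) = 0
    · by_cases h1 : E.a₁ = 0
      · exact ⟨3, by norm_num, chain (by norm_num : Nat.Prime 3)
          (caseB_order_three E hc h1 hΔ) (caseB_exists_third E hc h1 hΔ)⟩
      · refine ⟨2, by norm_num, chain (by norm_num : Nat.Prime 2)
          (exists_order_two E hΔ ?_)
          (fun P hP => (exists_half E hΔ P hP).imp fun Q hQ => by
            rwa [two_nsmul])⟩
        -- root of the two-torsion cubic in characteristic 2 with a₁ ≠ 0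
        have hb₂ : E.b₂ ≠ 0 := by
          simp only [WeierstrassCurve.b₂]
          intro h
          apply h1
          have ha₁sq : E.a₁^2 = 0 := by linear_combination h - 2*E.a₂*hc
          exact pow_eq_zero_iff (by norm_num : (2:ℕ) ≠ 0) |>.mp ha₁sq
        have hdeg : (C E.b₂ * X^2 + C E.b₆).degree = 2 := by
          compute_degree!
        obtain ⟨s, hs⟩ := IsAlgClosed.exists_root _ (by rw [hdeg]; norm_num)
        simp only [IsRoot.def, eval_add, eval_mul, eval_pow, eval_C, eval_X] at hs
        exact ⟨s, by linear_combination (2*s^3 + E.b₄*s) * hc + hs⟩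
    · refine ⟨2, by norm_num, chain (by norm_num : Nat.Prime 2)
        (exists_order_two E hΔ ?_)
        (fun P hP => (exists_half E hΔ P hP).imp fun Q hQ => by
          rwa [two_nsmul])⟩
      have h4 : (4:k) ≠ 0 := by
        rw [show (4:k) = 2*2 by norm_num]
        exact mul_ne_zero hc hc
      have hdeg : (C (4:k) * X^3 + C E.b₂ * X^2 + C (2*E.b₄) * X + C E.b₆).degree = 3 := by
        compute_degree!
      obtain ⟨s, hs⟩ := IsAlgClosed.exists_root _ (by rw [hdeg]; norm_num)
      simp only [IsRoot.def, eval_add, eval_mul, eval_pow, eval_C, eval_X] at hs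
      exact ⟨s, by linear_combination hs⟩
  obtain ⟨p, hp, h⟩ := key
  obtain ⟨P, hP⟩ := h m
  refine ⟨P, ?_, ?_⟩
  · rw [← addOrderOf_pos_iff, hP]
    exact pow_pos hp.pos _
  · rw [hP]
    calc m < 2 ^ m := Nat.lt_two_pow_self
      _ ≤ p ^ m := Nat.pow_le_pow_left hp.two_le m
      _ ≤ p ^ (m + 1) := Nat.pow_le_pow_right hp.pos (by omega)
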